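/- Every set of reals of cardinality strictly less than the bounding number b has the Hurewicz property Ufin(O,Γ). -/

import Mathlib

open Filter Set Cardinal

/-- The Rothberger property `S1(O,O)`: for every sequence of open covers one can select one
member from each so that the selections form a cover. -/
def RothbergerProp (X : Type*) [TopologicalSpace X] : Prop :=
  ∀ U : ℕ → Set (Set X),
    (∀ n, (∀ s ∈ U n, IsOpen s) ∧ ⋃₀ U n = Set.univ) →
    ∃ f : ℕ → Set X, (∀ n, f n ∈ U n) ∧ (⋃ n, f n) = Set.univ

/-- The Hurewicz property `Ufin(O,Γ)`: for every sequence of open covers one can select finite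
subfamilies whose unions form a γ-cover (every point is in all but finitely many of them). -/
def HurewiczProp (X : Type*) [TopologicalSpace X] : Prop :=
  ∀ U : ℕ → Set (Set X),
    (∀ n, (∀ s ∈ U n, IsOpen s) ∧ ⋃₀ U n = Set.univ) →
    ∃ F : ℕ → Set (Set X), (∀ n, F n ⊆ U n ∧ (F n).Finite) ∧
      ∀ x : X, ∀ᶠ n in atTop, x ∈ ⋃₀ F n

/-- The Menger property `Ufin(O,O)`. -/
def MengerProp (X : Type*) [TopologicalSpace X] : Prop :=
  ∀ U : ℕ → Set (Set X),
    (∀ n, (∀ s ∈ U n, IsOpen s) ∧ ⋃₀ U n = Set.univ) →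
    ∃ F : ℕ → Set (Set X), (∀ n, F n ⊆ U n ∧ (F n).Finite) ∧
      (⋃ n, ⋃₀ F n) = Set.univ

/-- The Gerlits–Nagy property `(*)_GN` = Rothberger + Hurewicz
(Kočinac–Scheepers characterization). -/
def GerlitsNagy (X : Type*) [TopologicalSpace X] : Prop :=
  RothbergerProp X ∧ HurewiczProp X

/-- Strong measure zero: for every sequence of positive reals `ε n` there is a cover
`A n` with `diam (A n) < ε n`. -/
def StrongMeasureZero (X : Type*) [PseudoMetricSpace X] : Prop :=
  ∀ ε : ℕ → ℝ, (∀ n, 0 < ε n) →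
    ∃ A : ℕ → Set X, (⋃ n, A n) = Set.univ ∧ ∀ n, EMetric.diam (A n) < ENNReal.ofReal (ε n)

/-- The bounding number `b`: least cardinality of an unbounded family in `(ℕ → ℕ, ≤*)`. -/
noncomputable def boundingNumber : Cardinal :=
  sInf { c : Cardinal | ∃ F : Set (ℕ → ℕ), #F = c ∧
    ∀ g : ℕ → ℕ, ∃ f ∈ F, ¬ ∀ᶠ n in atTop, f n ≤ g n }

/-- `cov(M)`: least cardinality of a family of meager sets of reals covering `ℝ`. -/
noncomputable def covMeager : Cardinal :=
  sInf { c : Cardinal | ∃ S : Set (Set ℝ), #S = c ∧ (∀ A ∈ S, IsMeagre A) ∧ ⋃₀ S = Set.univ }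

/-- `add(M)`: least cardinality of a family of meager sets of reals whose union is not meager. -/
noncomputable def addMeager : Cardinal :=
  sInf { c : Cardinal | ∃ S : Set (Set ℝ), #S = c ∧ (∀ A ∈ S, IsMeagre A) ∧ ¬ IsMeagre (⋃₀ S) }

/-- An ω-cover: `Set.univ ∉ U` and every finite set is contained in some member of `U`. -/
def IsOmegaCover {X : Type*} (U : Set (Set X)) : Prop :=
  Set.univ ∉ U ∧ ∀ F : Set X, F.Finite → ∃ u ∈ U, F ⊆ u

/-- A γ-cover: an infinite family such that every point belongs to all but finitely many members. -/
def IsGammaCover {X : Type*} (U : Set (Set X)) : Prop :=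
  U.Infinite ∧ ∀ x : X, {u ∈ U | x ∉ u}.Finite

/-- A family `U` is groupable (`U ∈ Ω^gp`) if it admits a partition into finite sets such that
every finite `F ⊆ X` is contained in a member of all but finitely many pieces. -/
def IsGroupable {X : Type*} (U : Set (Set X)) : Prop :=
  ∃ P : Set (Set (Set X)),
    (∀ G ∈ P, G.Finite ∧ G.Nonempty) ∧ P.PairwiseDisjoint id ∧ ⋃₀ P = U ∧
    ∀ F : Set X, F.Finite → {G ∈ P | ¬ ∃ u ∈ G, F ⊆ u}.Finite

/-- The selection property `S1(Ω, Ω^gp)`. -/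
def S1OmegaOmegaGp (X : Type*) [TopologicalSpace X] : Prop :=
  ∀ U : ℕ → Set (Set X),
    (∀ n, (∀ s ∈ U n, IsOpen s) ∧ IsOmegaCover (U n)) →
    ∃ f : ℕ → Set X, (∀ n, f n ∈ U n) ∧
      IsOmegaCover (Set.range f) ∧ IsGroupable (Set.range f)

/-- A γ-set: every open ω-cover contains a γ-subcover. -/
def IsGammaSet (X : Type*) [TopologicalSpace X] : Prop :=
  ∀ U : Set (Set X), (∀ s ∈ U, IsOpen s) → IsOmegaCover U →
    ∃ V ⊆ U, IsGammaCover V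

/-- Every set of reals of cardinality `< b` has the Hurewicz property. -/
theorem hurewicz_of_card_lt_boundingNumber (X : Set ℝ) (h : #X < boundingNumber) :
    HurewiczProp ↥X := by
  intro U hU
  by_cases hne : Nonempty ↥X
  · -- countable subcovers
    have hsub : ∀ n, ∃ e : ℕ → Set ↥X, (∀ k, e k ∈ U n) ∧ ⋃ k, e k = Set.univ := by
      intro n
      obtain ⟨T, hTc, hTU, hTcov⟩ := TopologicalSpace.isOpen_sUnion_countable (U n) (hU n).1
      rw [(hU n).2] at hTcov
      have hTne : T.Nonempty := by
        rcases hne with ⟨x⟩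
        have : (x : ↥X) ∈ ⋃₀ T := hTcov ▸ mem_univ x
        rcases this with ⟨t, ht, _⟩
        exact ⟨t, ht⟩
      obtain ⟨e, he⟩ := hTc.exists_surjective hTne
      refine ⟨fun k => (e k : Set ↥X), fun k => hTU (e k).2, ?_⟩
      apply eq_univ_of_univ_subset
      rw [← hTcov]
      rintro x ⟨t, ht, hx⟩
      obtain ⟨k, hk⟩ := he ⟨t, ht⟩
      exact mem_iUnion.2 ⟨k, by rw [hk]; exact hx⟩
    choose e he hecov using hsub
    -- for each x, pick f x n with x ∈ e n (f x n)
    have hfx : ∀ x : ↥X, ∃ f : ℕ → ℕ, ∀ n, x ∈ e n (f n) := by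
      intro x
      have : ∀ n, ∃ k, x ∈ e n k := fun n =>
        mem_iUnion.1 ((hecov n) ▸ mem_univ x)
      exact ⟨fun n => (this n).choose, fun n => (this n).choose_spec⟩
    choose f hf using hfx
    -- the family range f is bounded, else boundingNumber ≤ #X
    have hbdd : ∃ g : ℕ → ℕ, ∀ x : ↥X, ∀ᶠ n in atTop, f x n ≤ g n := by
      by_contra hc
      push_neg at hc
      have hmem : #(Set.range f) ∈ { c : Cardinal | ∃ F : Set (ℕ → ℕ), #F = c ∧
          ∀ g : ℕ → ℕ, ∃ f ∈ F, ¬ ∀ᶠ n in atTop, f n ≤ g n } := by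
        refine ⟨Set.range f, rfl, fun g => ?_⟩
        obtain ⟨x, hx⟩ := hc g
        exact ⟨f x, mem_range_self x, by rw [Filter.not_eventually]; simp only [not_le]; exact hx⟩
      have h1 : boundingNumber ≤ #(Set.range f) := csInf_le' hmem
      have h2 : #(Set.range f) ≤ #↥X := mk_range_le
      exact absurd h (not_lt.2 (h1.trans h2))
    obtain ⟨g, hg⟩ := hbdd
    refine ⟨fun n => e n '' {k | k ≤ g n}, fun n => ⟨?_, ?_⟩, ?_⟩
    · rintro s ⟨k, _, rfl⟩; exact he n k
    · exact (Set.finite_Iic (g n)).image _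
    · intro x
      filter_upwards [hg x] with n hn
      exact ⟨e n (f x n), ⟨f x n, hn, rfl⟩, hf x n⟩
  · exact ⟨fun _ => ∅, fun n => ⟨empty_subset _, finite_empty⟩,
      fun x => absurd ⟨x⟩ hne⟩
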